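/- In the double-Ising expansion, the determinant of the submatrix K^E of the Kac–Ward-type Hermitian matrix K obtained by removing the rows and columns indexed by an odd-cardinality set E of boundary edges vanishes: if |E| is odd, then det K^E = 0. -/

import Mathlib

open scoped Classical
open Matrix

noncomputable section

variable {V F : Type*}

/-- Origin (tail) of an oriented edge `(f, b)` of the graph with endpoint map `ends`. -/
def oTail (ends : F → V × V) (p : F × Bool) : V :=
  if p.2 then (ends p.1).1 else (ends p.1).2

/-- Head (terminal vertex) of an oriented edge. -/
def oHead (ends : F → V × V) (p : F × Bool) : V :=
  if p.2 then (ends p.1).2 else (ends p.1).1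

/-- Reversal of an oriented edge. -/
def oRev (p : F × Bool) : F × Bool := (p.1, !p.2)

/-- Direction (as a complex number) of an oriented edge in the straight-line drawing
given by the vertex positions `pos`. -/
def oDir (ends : F → V × V) (pos : V → ℂ) (p : F × Bool) : ℂ :=
  pos (oHead ends p) - pos (oTail ends p)

/-- The angle (argument of the direction) of an oriented edge. -/
def oAng (ends : F → V × V) (pos : V → ℂ) (p : F × Bool) : ℝ :=
  Complex.arg (oDir ends pos p)

/-- A dimer configuration (perfect matching) on the terminal graph `G^K`: a fixed-point
free involution of the oriented edges of `G`, matching each oriented edge either to its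
reversal (a "long" dimer) or to another oriented edge with the same origin
(a "short" dimer). -/
def IsTerminalMatching (ends : F → V × V) (m : F × Bool → F × Bool) : Prop :=
  Function.Involutive m ∧ (∀ p, m p ≠ p) ∧
    ∀ p, m p = oRev p ∨ oTail ends (m p) = oTail ends p

/-- An even subgraph: a set of edges in which every vertex has even degree. -/
def IsEvenSubgraph [Fintype F] [DecidableEq V] (ends : F → V × V) (P : Finset F) :
    Prop :=
  ∀ v : V, Even ((P.filter (fun f => (ends f).1 = v)).card +
    (P.filter (fun f => (ends f).2 = v)).card)

/-- The weight `x^K(D)` of a dimer configuration: long edges have weight `1` and the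
short edge joining `e, e'` has weight `(x_e x_{e'})^{1/2}`. -/
def matchWeight [Fintype F] (x : F → ℝ) (m : F × Bool → F × Bool) : ℝ :=
  ∏ p ∈ Finset.univ.filter (fun p : F × Bool => m p ≠ oRev p), Real.sqrt (x p.1)

/-- `p` is the endpoint of a short dimer of `m` with the smaller angle. -/
def isLow (ends : F → V × V) (pos : V → ℂ) (m : F × Bool → F × Bool)
    (p : F × Bool) : Prop :=
  m p ≠ oRev p ∧ oAng ends pos p < oAng ends pos (m p)

/-- The number `t(D)` of pairs of (short) dimers of `m` that cross in the drawing: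
two chords at the same vertex cross iff their angles interleave in the cyclic order. -/
def selfCross [Fintype F] (ends : F → V × V) (pos : V → ℂ)
    (m : F × Bool → F × Bool) : ℕ :=
  (Finset.univ.filter (fun pr : (F × Bool) × (F × Bool) =>
    isLow ends pos m pr.1 ∧ isLow ends pos m pr.2 ∧
    oTail ends pr.1 = oTail ends pr.2 ∧
    oAng ends pos pr.1 < oAng ends pos pr.2 ∧
    oAng ends pos pr.2 < oAng ends pos (m pr.1) ∧
    oAng ends pos (m pr.1) < oAng ends pos (m pr.2))).card

/-- The Kac–Ward transition matrix `T`, indexed by oriented edges: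
`T_{e,e'} = exp((i/2)·w(e,e'))·(x_e x_{e'})^{1/2}` if `t(e) = o(e')` and `e' ≠ ē`,
and `0` otherwise, where `w(e,e') ∈ (-π,π)` is the turning angle from `e` to `e'`. -/
def KWT [DecidableEq V] [DecidableEq F] (ends : F → V × V) (pos : V → ℂ)
    (x : F → ℝ) : Matrix (F × Bool) (F × Bool) ℂ :=
  Matrix.of fun e e' =>
    if oHead ends e = oTail ends e' ∧ e' ≠ oRev e then
      Complex.exp (Complex.I *
          ((Complex.arg (oDir ends pos e' / oDir ends pos e) / 2 : ℝ) : ℂ)) *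
        ((Real.sqrt (x e.1 * x e'.1) : ℝ) : ℂ)
    else 0

/-- The Kac–Ward matrix `KW(G,x) = I - T`. -/
def KacWard [DecidableEq V] [DecidableEq F] (ends : F → V × V) (pos : V → ℂ)
    (x : F → ℝ) : Matrix (F × Bool) (F × Bool) ℂ :=
  1 - KWT ends pos x

/-- The permutation matrix `J` exchanging each oriented edge with its reversal. -/
def revMat (F : Type*) [DecidableEq F] : Matrix (F × Bool) (F × Bool) ℂ :=
  Matrix.of fun e e' => if e' = oRev e then 1 else 0


private lemma aux_oRev_oRev (p : F × Bool) : oRev (oRev p) = p := by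
  cases p with | mk f b => cases b <;> rfl

private lemma aux_oHead_oRev (ends : F → V × V) (p : F × Bool) :
    oHead ends (oRev p) = oTail ends p := by
  cases p with | mk f b => cases b <;> rfl

private lemma aux_oTail_oRev (ends : F → V × V) (p : F × Bool) :
    oTail ends (oRev p) = oHead ends p := by
  cases p with | mk f b => cases b <;> rfl

private lemma aux_oDir_oRev (ends : F → V × V) (pos : V → ℂ) (p : F × Bool) :
    oDir ends pos (oRev p) = -oDir ends pos p := by
  simp [oDir, aux_oHead_oRev, aux_oTail_oRev]

private lemma aux_eq_or_rev {p q : F × Bool} (h : p.1 = q.1) : q = p ∨ q = oRev p := by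
  cases p with | mk f b => cases q with | mk g c =>
  simp only at h
  subst h
  cases b <;> cases c <;> simp [oRev]

private lemma aux_key (z w : ℂ) (hz : z ≠ 0) (hw : w ≠ 0) (h : (w / z).arg ≠ 0) :
    w / (‖w‖ : ℂ) * Complex.exp (Complex.I * (((z / -w).arg / 2 : ℝ) : ℂ)) +
      z / (‖z‖ : ℂ) * Complex.exp (Complex.I * (((w / -z).arg / 2 : ℝ) : ℂ)) = 0 := by
  have hv : w / -z ≠ 0 := by simp [div_ne_zero_iff, hz, hw]
  have hane : (w / -z).arg ≠ Real.pi := by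
    intro hpi
    apply h
    have h1 := Complex.arg_eq_pi_iff.mp hpi
    rw [div_neg] at h1
    apply Complex.arg_eq_zero_iff.mpr
    simp only [Complex.neg_re, Complex.neg_im] at h1
    exact ⟨by linarith [h1.1], by linarith [h1.2]⟩
  have hb : (z / -w).arg = -(w / -z).arg := by
    have h2 : z / -w = (w / -z)⁻¹ := by
      rw [div_neg, div_neg, inv_neg, inv_div]
    rw [h2, Complex.arg_inv, if_neg hane]
  rw [hb]
  set a := (w / -z).arg with ha
  have habs : (‖w / -z‖ : ℂ) ≠ 0 := by
    simpa [norm_ne_zero_iff] using hv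
  have hexp : Complex.exp (Complex.I * (a : ℂ)) = (w / -z) / (‖w / -z‖ : ℂ) := by
    have h3 := Complex.norm_mul_exp_arg_mul_I (w / -z)
    rw [eq_div_iff habs, mul_comm Complex.I, mul_comm]
    exact h3
  have hkey : z / (‖z‖ : ℂ) * Complex.exp (Complex.I * (a : ℂ)) = -(w / (‖w‖ : ℂ)) := by
    rw [hexp]
    have h4 : (‖z‖ : ℂ) ≠ 0 := by simpa using hz
    have h5 : (‖w‖ : ℂ) ≠ 0 := by simpa using hw
    have h6 : ‖w / -z‖ = ‖w‖ / ‖z‖ := by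
      rw [norm_div, norm_neg]
    rw [h6]
    push_cast
    field_simp
  have hene : Complex.exp (Complex.I * ((a / 2 : ℝ) : ℂ)) ≠ 0 := Complex.exp_ne_zero _
  have hsq : Complex.exp (Complex.I * ((a / 2 : ℝ) : ℂ)) * Complex.exp (Complex.I * ((a / 2 : ℝ) : ℂ)) =
      Complex.exp (Complex.I * (a : ℂ)) := by
    rw [← Complex.exp_add]
    push_cast
    ring_nf
  have hinv : Complex.exp (Complex.I * ((-a / 2 : ℝ) : ℂ)) * Complex.exp (Complex.I * ((a / 2 : ℝ) : ℂ)) = 1 := by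
    rw [← Complex.exp_add]
    push_cast
    ring_nf
    exact Complex.exp_zero
  have h7 : (w / (‖w‖ : ℂ) * Complex.exp (Complex.I * ((-a / 2 : ℝ) : ℂ)) +
      z / (‖z‖ : ℂ) * Complex.exp (Complex.I * ((a / 2 : ℝ) : ℂ))) *
        Complex.exp (Complex.I * ((a / 2 : ℝ) : ℂ)) = 0 := by
    rw [add_mul, mul_assoc, mul_assoc, hinv, hsq, mul_one, hkey]
    ring
  exact mul_right_cancel₀ hene (by rw [h7, zero_mul])

/-- Let `K = J·KW(G,x)` be the Kac–Ward-type Hermitian matrix of a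
finite planar weighted graph, and let `E` be a set of inward oriented boundary edges
(oriented edges whose origin is a univalent vertex).  If `|E|` is odd, then the
determinant of the submatrix `K^E` of `K` obtained by removing the rows and columns
indexed by `E` vanishes: `det K^E = 0`. -/
theorem statement17 [Fintype V] [DecidableEq V] [Fintype F] [DecidableEq F]
    (ends : F → V × V) (pos : V → ℂ) (x : F → ℝ)
    (hx : ∀ f, 0 ≤ x f)
    (hinj : Function.Injective pos)
    (hloop : ∀ f : F, (ends f).1 ≠ (ends f).2)
    (hplanar : ∀ f g : F, f ≠ g → ∀ z : ℂ,
      z ∈ openSegment ℝ (pos (ends f).1) (pos (ends f).2) →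
      z ∈ openSegment ℝ (pos (ends g).1) (pos (ends g).2) → False)
    (hvert : ∀ (f : F) (v : V),
      pos v ∉ openSegment ℝ (pos (ends f).1) (pos (ends f).2))
    (E : Finset (F × Bool))
    (hbd : ∀ e ∈ E,
      (Finset.univ.filter (fun f : F => (ends f).1 = oTail ends e)).card +
        (Finset.univ.filter (fun f : F => (ends f).2 = oTail ends e)).card = 1)
    (hodd : Odd E.card) :
    ((revMat F * KacWard ends pos x).submatrix
        (fun p : {p : F × Bool // p ∉ E} => (p : F × Bool))
        (fun p : {p : F × Bool // p ∉ E} => (p : F × Bool))).det = 0 := by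

  classical
  set K := revMat F * KacWard ends pos x with hK
  have hdir0 : ∀ p : F × Bool, oDir ends pos p ≠ 0 := by
    intro p hp
    rw [oDir, sub_eq_zero] at hp
    have h2 := hinj hp
    cases p with | mk f b =>
    cases b <;> simp [oHead, oTail] at h2 <;>
      first | exact hloop f h2 | exact hloop f h2.symm
  have hKe : ∀ e e' : F × Bool, K e e' =
      (if e' = oRev e then 1 else 0) -
      (if oTail ends e = oTail ends e' ∧ e' ≠ e then
        Complex.exp (Complex.I *
            ((Complex.arg (oDir ends pos e' / -oDir ends pos e) / 2 : ℝ) : ℂ)) *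
          ((Real.sqrt (x e.1 * x e'.1) : ℝ) : ℂ) else 0) := by
    intro e e'
    have h1 : K e e' = KacWard ends pos x (oRev e) e' := by
      rw [hK, Matrix.mul_apply, Finset.sum_eq_single (oRev e)]
      · simp [revMat]
      · intro b _ hb
        simp [revMat, hb]
      · simp
    rw [h1, KacWard]
    simp only [Matrix.sub_apply, Matrix.one_apply]
    congr 1
    · by_cases h : e' = oRev e
      · rw [if_pos h, if_pos h.symm]
      · rw [if_neg (fun hh => h hh.symm), if_neg h]
    · show KWT ends pos x (oRev e) e' = _
      rw [KWT]
      simp only [Matrix.of_apply, aux_oHead_oRev, aux_oRev_oRev, aux_oDir_oRev]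
      rfl
  set d : F × Bool → ℂ := fun p => oDir ends pos p / (‖oDir ends pos p‖ : ℂ) with hd
  have hd0 : ∀ p, d p ≠ 0 := by
    intro p
    exact div_ne_zero (hdir0 p) (by simpa using hdir0 p)
  have hdrev : ∀ p, d (oRev p) = -d p := by
    intro p
    simp only [hd, aux_oDir_oRev, norm_neg, neg_div]
  have hseg : ∀ p : F × Bool, openSegment ℝ (pos (ends p.1).1) (pos (ends p.1).2) =
      openSegment ℝ (pos (oTail ends p)) (pos (oHead ends p)) := by
    intro p
    cases p with | mk f b =>
    cases b
    · simp [oTail, oHead, openSegment_symm]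
    · simp [oTail, oHead]
  have harg : ∀ e e' : F × Bool, oTail ends e = oTail ends e' → e' ≠ e → e' ≠ oRev e →
      (oDir ends pos e' / oDir ends pos e).arg ≠ 0 := by
    intro e e' htl hne hnr h0
    set z := oDir ends pos e with hz
    set w := oDir ends pos e' with hw
    have hratio : w / z ≠ 0 := div_ne_zero (hdir0 e') (hdir0 e)
    set c : ℝ := ‖w / z‖ with hc
    have hcpos : 0 < c := by
      rw [hc]
      exact norm_pos_iff.mpr hratio
    have hwz : w = (c : ℂ) * z := by
      have h3 := Complex.norm_mul_exp_arg_mul_I (w / z)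
      rw [h0] at h3
      simp only [Complex.ofReal_zero, zero_mul, Complex.exp_zero, mul_one] at h3
      have hz0 : (‖z‖ : ℂ) ≠ 0 := by simpa using hdir0 e
      rw [hc, h3, div_mul_cancel₀ w (hdir0 e)]
    have hfne : e.1 ≠ e'.1 := by
      intro hh
      rcases aux_eq_or_rev hh with h | h
      · exact hne h
      · exact hnr h
    set t : ℝ := min 1 c / 2 with ht
    have ht0 : 0 < t := by positivity
    have ht1 : t < 1 := by
      have : min 1 c ≤ 1 := min_le_left _ _
      rw [ht]; linarith
    have htc : t < c := by
      have : min 1 c ≤ c := min_le_right _ _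
      rw [ht]; linarith
    set q : ℂ := pos (oTail ends e) + (t : ℝ) • z with hq
    apply hplanar e.1 e'.1 hfne q
    · rw [hseg e, openSegment_eq_image']
      exact ⟨t, ⟨ht0, ht1⟩, rfl⟩
    · rw [hseg e', openSegment_eq_image']
      refine ⟨t / c, ⟨by positivity, by rw [div_lt_one hcpos]; exact htc⟩, ?_⟩
      show pos (oTail ends e') + (t / c) • (pos (oHead ends e') - pos (oTail ends e')) = q
      have hww : pos (oHead ends e') - pos (oTail ends e') = w := rfl
      rw [hww, hwz, ← htl, hq]
      simp only [Complex.real_smul, Complex.ofReal_div]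
      congr 1
      have hc0 : (c : ℂ) ≠ 0 := by simpa using ne_of_gt hcpos
      field_simp
  have hanti : ∀ e e' : F × Bool, d e * K e e' + d e' * K e' e = 0 := by
    intro e e'
    rw [hKe e e', hKe e' e]
    by_cases h1 : e' = oRev e
    · subst h1
      rw [if_pos rfl, if_pos (aux_oRev_oRev e).symm]
      have hT1 : ¬(oTail ends e = oTail ends (oRev e) ∧ oRev e ≠ e) := by
        rintro ⟨hh, -⟩
        rw [aux_oTail_oRev] at hh
        exact hdir0 e (by rw [oDir, ← hh, sub_self])
      have hT2 : ¬(oTail ends (oRev e) = oTail ends e ∧ e ≠ oRev e) := by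
        rintro ⟨hh, -⟩
        rw [aux_oTail_oRev] at hh
        exact hdir0 e (by rw [oDir, hh, sub_self])
      rw [if_neg hT1, if_neg hT2, hdrev]
      ring
    · have h1' : e ≠ oRev e' := fun hh => h1 (by rw [hh, aux_oRev_oRev])
      rw [if_neg h1, if_neg h1']
      by_cases h2 : oTail ends e = oTail ends e' ∧ e' ≠ e
      · rw [if_pos h2, if_pos ⟨h2.1.symm, fun hh => h2.2 hh.symm⟩]
        have hsqrt : Real.sqrt (x e'.1 * x e.1) = Real.sqrt (x e.1 * x e'.1) := by
          rw [mul_comm]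
        rw [hsqrt]
        have hkey := aux_key (oDir ends pos e) (oDir ends pos e')
          (hdir0 e) (hdir0 e') (harg e e' h2.1 h2.2 h1)
        simp only [hd]
        linear_combination (-(Real.sqrt (x e.1 * x e'.1) : ℂ)) * hkey
      · have h2' : ¬(oTail ends e' = oTail ends e ∧ e ≠ e') := by
          rintro ⟨ha, hb⟩
          push_neg at h2
          exact hb (h2 ha.symm).symm
        rw [if_neg h2, if_neg h2']
        ring
  set ι : {p : F × Bool // p ∉ E} → F × Bool := fun p => (p : F × Bool) with hι
  have hcard : Odd (Fintype.card {p : F × Bool // p ∉ E}) := by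
    have h1 : Fintype.card {p : F × Bool // p ∉ E} = Fintype.card (F × Bool) - E.card := by
      rw [Fintype.card_subtype_compl]
      congr 1
      exact Fintype.card_coe E
    rw [h1]
    apply Nat.Even.sub_odd
    · rw [← Finset.card_univ]
      exact Finset.card_le_univ E
    · rw [Fintype.card_prod, Fintype.card_bool]
      exact even_two.mul_left _
    · exact hodd
  set N : Matrix {p : F × Bool // p ∉ E} {p : F × Bool // p ∉ E} ℂ :=
    Matrix.of fun p q => d (ι p) * K (ι p) (ι q) with hN
  have hNt : Nᵀ = -N := by
    ext p q
    simp only [Matrix.transpose_apply, Matrix.neg_apply, hN, Matrix.of_apply]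
    linear_combination hanti (ι q) (ι p)
  have hdetN : N.det = 0 := by
    have h1 : N.det = -N.det := by
      conv_lhs => rw [← Matrix.det_transpose, hNt]
      rw [Matrix.det_neg, hcard.neg_one_pow, neg_one_mul]
    have h2 : N.det + N.det = 0 := by linear_combination h1
    exact add_self_eq_zero.mp h2
  have hfact : N = Matrix.diagonal (fun p => d (ι p)) * (K.submatrix ι ι) := by
    ext p q
    rw [Matrix.diagonal_mul]
    rfl
  rw [hfact, Matrix.det_mul, Matrix.det_diagonal] at hdetN
  rcases mul_eq_zero.mp hdetN with h | h
  · exact absurd h (Finset.prod_ne_zero_iff.mpr fun p _ => hd0 _)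
  · exact h
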